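/- Let K ∈ ℂ^{T×T} be the flip permutation matrix (K_{s,t}=1 iff s=t=1 or s+t=T+2), and define K^{1/2} = e_1 e_1ᵀ + ∑_{ℓ} [(e_ℓ+e_{T−ℓ+2})(e_ℓ+e_{T−ℓ+2})ᵀ/‖e_ℓ+e_{T−ℓ+2}‖² + i(e_ℓ−e_{T−ℓ+2})(e_ℓ−e_{T−ℓ+2})ᵀ/‖e_ℓ−e_{T−ℓ+2}‖²] where the sum ranges over ℓ ∈ {2,…,T} with ℓ ≤ T−ℓ+2 (omitting zero terms). Then (K^{1/2})² = K. -/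

import Mathlib

open Matrix

/-- The index map `a ↦ T - a` (0-indexed version of `ℓ ↦ T - ℓ + 2`),
fixing `0`. -/
def flipIdx {T : ℕ} (hT : 0 < T) (a : Fin T) : Fin T :=
  ⟨(T - a.val) % T, Nat.mod_lt _ hT⟩

/-- The standard basis vector `e_j` of `ℂ^T`. -/
def ebC {T : ℕ} (j : Fin T) : Fin T → ℂ := Pi.single j 1


lemma ebC_apply {T : ℕ} (j i : Fin T) : ebC j i = if i = j then 1 else 0 :=
  Pi.single_apply j 1 i

lemma sum_ebC_mul {T : ℕ} (a b : Fin T) :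
    ∑ i, ebC a i * ebC b i = if a = b then 1 else 0 := by
  simp only [ebC_apply, ite_mul, one_mul, zero_mul, mul_ite, mul_one, mul_zero]
  by_cases h : a = b
  · subst h; simp
  · rw [Finset.sum_eq_zero, if_neg h]
    intro i _
    by_cases h1 : i = a <;> by_cases h2 : i = b <;> simp_all

lemma sum_add_sq {T : ℕ} (a b : Fin T) :
    ∑ i, (ebC a + ebC b) i ^ 2 = if a = b then 4 else 2 := by
  have h1 : ∀ i ∈ Finset.univ, (ebC a + ebC b) i ^ 2 =
      ebC a i * ebC a i + (2 * (ebC a i * ebC b i) + ebC b i * ebC b i) := by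
    intro i _; simp only [Pi.add_apply]; ring
  rw [Finset.sum_congr rfl h1, Finset.sum_add_distrib, Finset.sum_add_distrib,
    ← Finset.mul_sum, sum_ebC_mul, sum_ebC_mul, sum_ebC_mul]
  by_cases h : a = b <;> simp [h] <;> norm_num

lemma sum_sub_sq {T : ℕ} (a b : Fin T) :
    ∑ i, (ebC a - ebC b) i ^ 2 = if a = b then 0 else 2 := by
  have h1 : ∀ i ∈ Finset.univ, (ebC a - ebC b) i ^ 2 =
      ebC a i * ebC a i + ((-2) * (ebC a i * ebC b i) + ebC b i * ebC b i) := by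
    intro i _; simp only [Pi.sub_apply]; ring
  rw [Finset.sum_congr rfl h1, Finset.sum_add_distrib, Finset.sum_add_distrib,
    ← Finset.mul_sum, sum_ebC_mul, sum_ebC_mul, sum_ebC_mul]
  by_cases h : a = b <;> simp [h] <;> norm_num

lemma flip_val {T : ℕ} (h : 0 < T) (a : Fin T) (ha : 1 ≤ a.val) :
    (flipIdx h a).val = T - a.val := by
  have := a.isLt
  simp only [flipIdx]
  exact Nat.mod_eq_of_lt (by omega)

noncomputable def Fent (T : ℕ) (s t : Fin T) : ℂ :=
  if s.val = 0 ∧ t.val = 0 then 1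
  else if s.val = t.val ∧ s.val * 2 = T then 1
  else if s.val = t.val then (1 + Complex.I) / 2
  else if s.val + t.val = T then (1 - Complex.I) / 2
  else 0

lemma ksqrt_entry (T : ℕ) (hT : 2 ≤ T) (s t : Fin T) :
    (vecMulVec (ebC (⟨0, Nat.lt_of_lt_of_le Nat.two_pos hT⟩ : Fin T)) (ebC (⟨0, Nat.lt_of_lt_of_le Nat.two_pos hT⟩ : Fin T)) +
      ∑ a ∈ Finset.univ.filter (fun a : Fin T => 1 ≤ a.val ∧ a.val ≤ T - a.val),
        ((∑ i, (ebC a + ebC (flipIdx (Nat.lt_of_lt_of_le Nat.two_pos hT) a)) i ^ 2)⁻¹ •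
            vecMulVec (ebC a + ebC (flipIdx (Nat.lt_of_lt_of_le Nat.two_pos hT) a))
              (ebC a + ebC (flipIdx (Nat.lt_of_lt_of_le Nat.two_pos hT) a))
          + (Complex.I * (∑ i, (ebC a - ebC (flipIdx (Nat.lt_of_lt_of_le Nat.two_pos hT) a)) i ^ 2)⁻¹) •
            vecMulVec (ebC a - ebC (flipIdx (Nat.lt_of_lt_of_le Nat.two_pos hT) a))
              (ebC a - ebC (flipIdx (Nat.lt_of_lt_of_le Nat.two_pos hT) a)))) s t = Fent T s t := by
  have h0 : 0 < T := by omega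
  have hsT := s.isLt
  have htT := t.isLt
  rw [Matrix.add_apply, Matrix.sum_apply]
  simp only [Matrix.add_apply, Matrix.smul_apply, smul_eq_mul, vecMulVec_apply,
    sum_add_sq, sum_sub_sq]
  simp only [Pi.add_apply, Pi.sub_apply, ebC_apply]
  by_cases hs0 : s.val = 0
  · rw [Finset.sum_eq_zero, add_zero]
    · rw [if_pos (Fin.ext hs0 : s = (⟨0, h0⟩ : Fin T)), one_mul]
      by_cases ht0 : t.val = 0
      · rw [if_pos (Fin.ext ht0 : t = (⟨0, h0⟩ : Fin T))]
        simp only [Fent]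
        rw [if_pos ⟨hs0, ht0⟩]
      · rw [if_neg (show t ≠ (⟨0, h0⟩ : Fin T) from fun h => ht0 (by rw [h]))]
        simp only [Fent]
        split_ifs <;> first | rfl | omega | (simp only [true_and] at *; omega)
    · intro a ha
      rw [Finset.mem_filter] at ha
      obtain ⟨-, ha1, ha2⟩ := ha
      have haT := a.isLt
      have hfa : (flipIdx h0 a).val = T - a.val := flip_val h0 a ha1
      have h1 : s ≠ a := fun h => by
        have := congrArg Fin.val h; omega
      have h2 : s ≠ flipIdx h0 a := fun h => by
        have := congrArg Fin.val h; omega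
      rw [if_neg h1, if_neg h2]
      ring
  · have hs1 : 1 ≤ s.val := by omega
    obtain ⟨a0, ha1, ha2, hsor, huniq⟩ : ∃ a0 : Fin T,
        1 ≤ a0.val ∧ a0.val ≤ T - a0.val ∧ (s.val = a0.val ∨ s.val = T - a0.val) ∧
        ∀ a : Fin T, 1 ≤ a.val → a.val ≤ T - a.val →
          (s.val = a.val ∨ s.val = T - a.val) → a = a0 := by
      by_cases hcase : s.val ≤ T - s.val
      · exact ⟨s, hs1, hcase, Or.inl rfl,
          fun a h1 h2 h3 => Fin.ext (by have := a.isLt; omega)⟩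
      · have hf : (flipIdx h0 s).val = T - s.val := flip_val h0 s hs1
        exact ⟨flipIdx h0 s, by omega, by omega, Or.inr (by omega),
          fun a h1 h2 h3 => Fin.ext (by have := a.isLt; omega)⟩
    have ha0T := a0.isLt
    have hfa0 : (flipIdx h0 a0).val = T - a0.val := flip_val h0 a0 ha1
    have hmem : a0 ∈ Finset.univ.filter (fun a : Fin T => 1 ≤ a.val ∧ a.val ≤ T - a.val) :=
      Finset.mem_filter.mpr ⟨Finset.mem_univ _, ha1, ha2⟩
    have hside : ∀ a ∈ Finset.univ.filter (fun a : Fin T => 1 ≤ a.val ∧ a.val ≤ T - a.val),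
        a ≠ a0 →
        ((if a = flipIdx h0 a then (4:ℂ) else 2)⁻¹ *
            (((if s = a then (1:ℂ) else 0) + if s = flipIdx h0 a then 1 else 0) *
              ((if t = a then (1:ℂ) else 0) + if t = flipIdx h0 a then 1 else 0)) +
          Complex.I * (if a = flipIdx h0 a then (0:ℂ) else 2)⁻¹ *
            (((if s = a then (1:ℂ) else 0) - if s = flipIdx h0 a then 1 else 0) *
              ((if t = a then (1:ℂ) else 0) - if t = flipIdx h0 a then 1 else 0))) = 0 := by
      intro a ha hne
      rw [Finset.mem_filter] at ha
      obtain ⟨-, hb1, hb2⟩ := ha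
      have hfa : (flipIdx h0 a).val = T - a.val := flip_val h0 a hb1
      have h1 : s ≠ a := fun h =>
        hne (huniq a hb1 hb2 (Or.inl (congrArg Fin.val h)))
      have h2 : s ≠ flipIdx h0 a := fun h =>
        hne (huniq a hb1 hb2 (Or.inr (by have := congrArg Fin.val h; omega)))
      rw [if_neg h1, if_neg h2]
      ring
    rw [Finset.sum_eq_single_of_mem a0 hmem hside]
    rw [if_neg (show s ≠ (⟨0, h0⟩ : Fin T) from fun h => hs0 (by rw [h])), zero_mul, zero_add]
    by_cases hd : a0 = flipIdx h0 a0
    · have hdv : a0.val = T - a0.val := by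
        have := congrArg Fin.val hd; omega
      have h2T : a0.val * 2 = T := by omega
      have hsv : s.val = a0.val := by omega
      have hsa : s = a0 := Fin.ext hsv
      rw [if_pos hd, if_pos hd, ← hd, if_pos hsa]
      by_cases hta : t = a0
      · have htv : t.val = a0.val := congrArg Fin.val hta
        rw [if_pos hta]
        have hF : Fent T s t = 1 := by
          simp only [Fent]
          split_ifs <;> first | rfl | omega | (simp only [true_and] at *; omega)
        rw [hF]
        norm_num
      · have htv : t.val ≠ a0.val := fun h => hta (Fin.ext h)
        rw [if_neg hta]
        have hF : Fent T s t = 0 := by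
          simp only [Fent]
          split_ifs <;> first | rfl | omega | (simp only [true_and] at *; omega)
        rw [hF]
        ring
    · have hdv : a0.val ≠ T - a0.val := fun h => hd (Fin.ext (by omega))
      have hlt : a0.val < T - a0.val := by omega
      rw [if_neg hd, if_neg hd]
      rcases hsor with hsv | hsv
      · have hsa : s = a0 := Fin.ext hsv
        rw [if_pos hsa, if_neg (show s ≠ flipIdx h0 a0 from fun h => by
          have := congrArg Fin.val h; omega)]
        by_cases hta : t.val = a0.val
        · rw [if_pos (Fin.ext hta : t = a0),
            if_neg (show t ≠ flipIdx h0 a0 from fun h => by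
              have := congrArg Fin.val h; omega)]
          have hF : Fent T s t = (1 + Complex.I) / 2 := by
            simp only [Fent]
            split_ifs <;> first | rfl | omega | (simp only [true_and] at *; omega)
          rw [hF]; ring
        · by_cases htb : t.val = T - a0.val
          · rw [if_neg (show t ≠ a0 from fun h => hta (congrArg Fin.val h)),
              if_pos (Fin.ext (by omega) : t = flipIdx h0 a0)]
            have hF : Fent T s t = (1 - Complex.I) / 2 := by
              simp only [Fent]
              split_ifs <;> first | rfl | omega | (simp only [true_and] at *; omega)
            rw [hF]; ring
          · rw [if_neg (show t ≠ a0 from fun h => hta (congrArg Fin.val h)),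
              if_neg (show t ≠ flipIdx h0 a0 from fun h => by
                have := congrArg Fin.val h; omega)]
            have hF : Fent T s t = 0 := by
              simp only [Fent]
              split_ifs <;> first | rfl | omega | (simp only [true_and] at *; omega)
            rw [hF]; ring
      · have hsa : s = flipIdx h0 a0 := Fin.ext (by omega)
        rw [if_neg (show s ≠ a0 from fun h => by
          have := congrArg Fin.val h; omega), if_pos hsa]
        by_cases hta : t.val = a0.val
        · rw [if_pos (Fin.ext hta : t = a0),
            if_neg (show t ≠ flipIdx h0 a0 from fun h => by
              have := congrArg Fin.val h; omega)]
          have hF : Fent T s t = (1 - Complex.I) / 2 := by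
            simp only [Fent]
            split_ifs <;> first | rfl | omega | (simp only [true_and] at *; omega)
          rw [hF]; ring
        · by_cases htb : t.val = T - a0.val
          · rw [if_neg (show t ≠ a0 from fun h => hta (congrArg Fin.val h)),
              if_pos (Fin.ext (by omega) : t = flipIdx h0 a0)]
            have hF : Fent T s t = (1 + Complex.I) / 2 := by
              simp only [Fent]
              split_ifs <;> first | rfl | omega | (simp only [true_and] at *; omega)
            rw [hF]; ring
          · rw [if_neg (show t ≠ a0 from fun h => hta (congrArg Fin.val h)),
              if_neg (show t ≠ flipIdx h0 a0 from fun h => by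
                have := congrArg Fin.val h; omega)]
            have hF : Fent T s t = 0 := by
              simp only [Fent]
              split_ifs <;> first | rfl | omega | (simp only [true_and] at *; omega)
            rw [hF]; ring

lemma sumF (T : ℕ) (hT : 2 ≤ T) (s t : Fin T) :
    ∑ k, Fent T s k * Fent T k t =
      if (s.val = 0 ∧ t.val = 0) ∨ (s.val + t.val = T) then 1 else 0 := by
  have h0 : 0 < T := by omega
  have hsT := s.isLt
  have htT := t.isLt
  by_cases hs0 : s.val = 0
  · have hone : ∀ k : Fin T, Fent T s k = if k.val = 0 then 1 else 0 := by
      intro k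
      have := k.isLt
      simp only [Fent]
      split_ifs <;> first | rfl | omega | (simp only [true_and] at *; omega)
    rw [Finset.sum_eq_single (⟨0, h0⟩ : Fin T)]
    · have hk0 : ((⟨0, h0⟩ : Fin T)).val = 0 := rfl
      rw [hone, if_pos hk0, one_mul]
      simp only [Fent, hk0]
      split_ifs <;> first | rfl | omega | (simp only [true_and] at *; omega)
    · intro k _ hk
      have hkv : k.val ≠ 0 := fun h => hk (Fin.ext h)
      rw [hone, if_neg hkv, zero_mul]
    · intro h; exact absurd (Finset.mem_univ _) h
  · have hs1 : 1 ≤ s.val := by omega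
    set b : Fin T := flipIdx h0 s with hbdef
    have hb : b.val = T - s.val := flip_val h0 s hs1
    have hb1 : 1 ≤ b.val := by omega
    have hsupp : ∀ k : Fin T, k ≠ s → k ≠ b → Fent T s k = 0 := by
      intro k hk1 hk2
      have hv1 : k.val ≠ s.val := fun h => hk1 (Fin.ext h)
      have hv2 : k.val ≠ b.val := fun h => hk2 (Fin.ext h)
      simp only [Fent]
      split_ifs <;> first | rfl | omega | (simp only [true_and] at *; omega)
    rw [← Finset.sum_subset (Finset.subset_univ ({s, b} : Finset (Fin T)))
      (fun k _ hk => by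
        simp only [Finset.mem_insert, Finset.mem_singleton, not_or] at hk
        rw [hsupp k hk.1 hk.2, zero_mul])]
    by_cases hsb : b = s
    · have hbv : s.val = T - s.val := by rw [← hb, hsb]
      have hss2 : s.val * 2 = T := by omega
      rw [hsb, show ({s, s} : Finset (Fin T)) = {s} by simp, Finset.sum_singleton]
      have h1 : Fent T s s = 1 := by
        simp only [Fent]
        split_ifs <;> first | rfl | omega | (simp only [true_and] at *; omega)
      rw [h1, one_mul]
      simp only [Fent]
      split_ifs <;> first | rfl | omega | (simp only [true_and] at *; omega)
    · have hv : b.val ≠ s.val := fun h => hsb (Fin.ext h)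
      have hs2 : s.val * 2 ≠ T := by omega
      rw [Finset.sum_pair (fun h => hsb (h.symm))]
      have e1 : Fent T s s = (1 + Complex.I) / 2 := by
        simp only [Fent]
        split_ifs <;> first | rfl | omega | (simp only [true_and] at *; omega)
      have e2 : Fent T s b = (1 - Complex.I) / 2 := by
        simp only [Fent]
        split_ifs <;> first | rfl | omega | (simp only [true_and] at *; omega)
      rw [e1, e2]
      by_cases ht1 : t.val = s.val
      · have e3 : Fent T s t = (1 + Complex.I) / 2 := by
          simp only [Fent]
          split_ifs <;> first | rfl | omega | (simp only [true_and] at *; omega)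
        have e4 : Fent T b t = (1 - Complex.I) / 2 := by
          simp only [Fent]
          split_ifs <;> first | rfl | omega | (simp only [true_and] at *; omega)
        rw [e3, e4, if_neg (by omega)]
        linear_combination ((1 : ℂ) / 2) * Complex.I_sq
      · by_cases ht2 : t.val = b.val
        · have e3 : Fent T s t = (1 - Complex.I) / 2 := by
            simp only [Fent]
            split_ifs <;> first | rfl | omega | (simp only [true_and] at *; omega)
          have e4 : Fent T b t = (1 + Complex.I) / 2 := by
            simp only [Fent]
            split_ifs <;> first | rfl | omega | (simp only [true_and] at *; omega)
          rw [e3, e4, if_pos (by omega)]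
          linear_combination (-(1 : ℂ) / 2) * Complex.I_sq
        · have e3 : Fent T s t = 0 := by
            simp only [Fent]
            split_ifs <;> first | rfl | omega | (simp only [true_and] at *; omega)
          have e4 : Fent T b t = 0 := by
            simp only [Fent]
            split_ifs <;> first | rfl | omega | (simp only [true_and] at *; omega)
          rw [e3, e4, if_neg (by omega)]
          ring


theorem stmt5 (T : ℕ) (hT : 2 ≤ T)
    (K : Matrix (Fin T) (Fin T) ℂ)
    (hK : ∀ s t : Fin T, K s t =
      if (s.val = 0 ∧ t.val = 0) ∨ (s.val + t.val = T) then 1 else 0)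
    (Ksqrt : Matrix (Fin T) (Fin T) ℂ)
    (hKsqrt : Ksqrt =
      vecMulVec (ebC (⟨0, by omega⟩ : Fin T)) (ebC (⟨0, by omega⟩ : Fin T)) +
      ∑ a ∈ Finset.univ.filter (fun a : Fin T => 1 ≤ a.val ∧ a.val ≤ T - a.val),
        ((∑ i, (ebC a + ebC (flipIdx (by omega) a)) i ^ 2)⁻¹ •
            vecMulVec (ebC a + ebC (flipIdx (by omega) a))
              (ebC a + ebC (flipIdx (by omega) a))
          + (Complex.I * (∑ i, (ebC a - ebC (flipIdx (by omega) a)) i ^ 2)⁻¹) •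
            vecMulVec (ebC a - ebC (flipIdx (by omega) a))
              (ebC a - ebC (flipIdx (by omega) a)))) :
    Ksqrt * Ksqrt = K := by
  have hent : ∀ s t : Fin T, Ksqrt s t = Fent T s t := by
    intro s t
    rw [hKsqrt]
    exact ksqrt_entry T hT s t
  ext s t
  rw [Matrix.mul_apply, hK s t, ← sumF T hT s t]
  exact Finset.sum_congr rfl (fun k _ => by rw [hent s k, hent k t])
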